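/- arXiv:1901.00260 — 2 statements merged into one kernel-verified Lean document; each statement's English description precedes it below -/
import Mathlib

section
/- For K > 0, the derivative of φ₁(t) = t/(1 − exp(−K sinh t)) tends to 1 as t → +∞ and tends to 0 as t → −∞. -/
open Real Filter Topology

private lemma sinh_tendsto_atTop : Tendsto Real.sinh atTop atTop := by
  have hlow : (fun t : ℝ => (Real.exp t - 1) / 2) ≤ᶠ[atTop] Real.sinh := by
    filter_upwards [eventually_ge_atTop (0:ℝ)] with t ht
    have : Real.exp (-t) ≤ 1 := Real.exp_le_one_iff.mpr (by linarith)
    show (Real.exp t - 1) / 2 ≤ Real.sinh t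
    rw [Real.sinh_eq]
    linarith
  refine tendsto_atTop_mono' atTop hlow ?_
  have h := tendsto_atTop_add_const_right atTop (-1 : ℝ) tendsto_exp_atTop
  exact (h.atTop_div_const two_pos).congr fun t => by ring

private lemma sq_mul_exp_neg_mul (b : ℝ) (hb : 0 < b) :
    Tendsto (fun x : ℝ => x ^ 2 * Real.exp (-(b * x))) atTop (𝓝 0) := by
  have h := (Real.tendsto_pow_mul_exp_neg_atTop_nhds_zero 2).comp
    (tendsto_id.const_mul_atTop hb)
  have h2 := h.const_mul ((1/b) ^ 2)
  rw [mul_zero] at h2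
  refine h2.congr fun x => ?_
  have hbne : b ≠ 0 := ne_of_gt hb
  field_simp [Function.comp]
  simp only [Function.comp_apply, id]
  ring

private lemma auxA {K : ℝ} (hK : 0 < K) :
    Tendsto (fun t : ℝ => t * Real.cosh t * Real.exp (-K * Real.sinh t)) atTop (𝓝 0) := by
  have hb : Tendsto (fun t : ℝ =>
      Real.exp (K/2) * ((Real.exp t) ^ 2 * Real.exp (-((K/2) * Real.exp t)))) atTop (𝓝 0) := by
    have := ((sq_mul_exp_neg_mul (K/2) (by linarith)).comp tendsto_exp_atTop).const_mul
      (Real.exp (K/2))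
    rw [mul_zero] at this
    exact this.congr fun t => by simp [Function.comp]
  apply squeeze_zero_norm' _ hb
  filter_upwards [eventually_ge_atTop (0:ℝ)] with t ht
  have h1 : t ≤ Real.exp t := (Real.add_one_le_exp t).trans' (by linarith)
  have h2 : Real.cosh t ≤ Real.exp t := by
    rw [Real.cosh_eq]
    have : Real.exp (-t) ≤ Real.exp t := Real.exp_le_exp.mpr (by linarith)
    linarith
  have h3 : Real.exp (-K * Real.sinh t) ≤ Real.exp (K/2) * Real.exp (-((K/2) * Real.exp t)) := by
    rw [← Real.exp_add]
    apply Real.exp_le_exp.mpr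
    rw [Real.sinh_eq]
    have : Real.exp (-t) ≤ 1 := Real.exp_le_one_iff.mpr (by linarith)
    nlinarith
  have hct : 0 ≤ Real.cosh t := (Real.cosh_pos t).le
  have hE : 0 ≤ Real.exp (-K * Real.sinh t) := (Real.exp_pos _).le
  rw [Real.norm_eq_abs, abs_of_nonneg (by positivity)]
  calc t * Real.cosh t * Real.exp (-K * Real.sinh t)
      ≤ Real.exp t * Real.exp t * (Real.exp (K/2) * Real.exp (-((K/2) * Real.exp t))) := by
        apply mul_le_mul _ h3 hE (by positivity)
        exact mul_le_mul h1 h2 hct (Real.exp_pos t).le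
    _ = Real.exp (K/2) * ((Real.exp t) ^ 2 * Real.exp (-((K/2) * Real.exp t))) := by ring

private lemma deriv_formula {K : ℝ} (hK : K ≠ 0) {t : ℝ} (ht : t ≠ 0) :
    deriv (fun t : ℝ => t / (1 - Real.exp (-K * Real.sinh t))) t =
      ((1 - Real.exp (-K * Real.sinh t)) - K * (t * Real.cosh t * Real.exp (-K * Real.sinh t)))
        / (1 - Real.exp (-K * Real.sinh t)) ^ 2 := by
  have hne : 1 - Real.exp (-K * Real.sinh t) ≠ 0 := by
    intro h
    have : Real.exp (-K * Real.sinh t) = 1 := by linarith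
    rw [Real.exp_eq_one_iff] at this
    rcases mul_eq_zero.mp this with h' | h'
    · exact hK (neg_eq_zero.mp h')
    · exact ht (Real.sinh_eq_zero.mp h')
  have hu : HasDerivAt (fun t : ℝ => t) 1 t := hasDerivAt_id t
  have hv : HasDerivAt (fun t : ℝ => 1 - Real.exp (-K * Real.sinh t))
      (-(Real.exp (-K * Real.sinh t) * (-K * Real.cosh t))) t :=
    (((Real.hasDerivAt_sinh t).const_mul (-K)).exp).const_sub 1
  have : deriv (fun t : ℝ => t / (1 - Real.exp (-K * Real.sinh t))) t = _ := (hu.div hv hne).deriv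
  rw [this]
  ring

theorem phi1_deriv_limits_at_infty (K : ℝ) (hK : 0 < K) :
    Tendsto (deriv (fun t : ℝ => t / (1 - Real.exp (-K * Real.sinh t)))) atTop (nhds 1) ∧
      Tendsto (deriv (fun t : ℝ => t / (1 - Real.exp (-K * Real.sinh t)))) atBot (nhds 0) := by
  have hKne : K ≠ 0 := ne_of_gt hK
  set E : ℝ → ℝ := fun t => Real.exp (-K * Real.sinh t) with hE
  have hsinh_bot : Tendsto Real.sinh atBot atBot := by
    have := tendsto_neg_atTop_atBot.comp (sinh_tendsto_atTop.comp tendsto_neg_atBot_atTop)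
    exact this.congr fun t => by simp [Function.comp, Real.sinh_neg]
  constructor
  · -- atTop
    have hE0 : Tendsto E atTop (𝓝 0) :=
      Real.tendsto_exp_atBot.comp (sinh_tendsto_atTop.const_mul_atTop_of_neg (by linarith))
    have hnum : Tendsto (fun t => (1 - E t) - K * (t * Real.cosh t * E t)) atTop
        (𝓝 ((1 - 0) - K * 0)) :=
      (tendsto_const_nhds.sub hE0).sub ((auxA hK).const_mul K)
    have hden : Tendsto (fun t => (1 - E t) ^ 2) atTop (𝓝 ((1 - 0) ^ 2)) :=
      (tendsto_const_nhds.sub hE0).pow 2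
    have := hnum.div hden (by norm_num)
    rw [show ((1:ℝ) - 0 - K * 0) / (1 - 0) ^ 2 = 1 by norm_num] at this
    refine this.congr' ?_
    filter_upwards [eventually_gt_atTop (0:ℝ)] with t ht
    exact (deriv_formula hKne (ne_of_gt ht)).symm
  · -- atBot
    have hEtop : Tendsto E atBot atTop :=
      Real.tendsto_exp_atTop.comp (hsinh_bot.const_mul_atBot_of_neg (by linarith))
    have term1 : Tendsto (fun t => (1 - E t)⁻¹) atBot (𝓝 0) := by
      have h := ((tendsto_atTop_add_const_right atBot (-1 : ℝ) hEtop).inv_tendsto_atTop).neg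
      rw [neg_zero] at h
      refine h.congr fun t => ?_
      simp only [Pi.inv_apply]
      rw [show E t + -1 = -(1 - E t) by ring, inv_neg, neg_neg]
    have term2 : Tendsto (fun t => K * (t * Real.cosh t * E t) / (1 - E t) ^ 2) atBot (𝓝 0) := by
      have hb : Tendsto (fun t : ℝ =>
          4 * K * ((-t) * Real.cosh (-t) * Real.exp (-K * Real.sinh (-t)))) atBot (𝓝 0) := by
        have := ((auxA hK).comp tendsto_neg_atBot_atTop).const_mul (4 * K)
        rw [mul_zero] at this
        exact this.congr fun t => by simp [Function.comp]
      apply squeeze_zero_norm' _ hb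
      filter_upwards [eventually_le_atBot (0:ℝ), hEtop.eventually_ge_atTop 2] with t ht h2
      have hEpos : 0 < E t := Real.exp_pos _
      have hch : 0 < Real.cosh t := Real.cosh_pos t
      rw [Real.sinh_neg, Real.cosh_neg,
        show (-K * -Real.sinh t) = -(-K * Real.sinh t) by ring, Real.exp_neg]
      have hEr : Real.exp (-K * Real.sinh t) = E t := rfl
      rw [hEr]
      have hden : (0:ℝ) < (1 - E t) ^ 2 := by nlinarith
      rw [Real.norm_eq_abs, abs_div, abs_of_pos hden, div_le_iff₀ hden]
      have habs : |K * (t * Real.cosh t * E t)| = K * ((-t) * Real.cosh t * E t) := by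
        rw [abs_mul, abs_of_pos hK, abs_mul, abs_mul, abs_of_nonpos ht,
          abs_of_pos hch, abs_of_pos hEpos]
      rw [habs]
      have key : E t * E t ≤ 4 * (1 - E t) ^ 2 := by nlinarith
      have h1 : 0 ≤ K * (-t * Real.cosh t) :=
        mul_nonneg hK.le (mul_nonneg (neg_nonneg.mpr ht) hch.le)
      have h3 : E t ≤ 4 * (1 - E t) ^ 2 * (E t)⁻¹ := by
        rw [← div_eq_mul_inv, le_div_iff₀ hEpos]; linarith [key]
      calc K * (-t * Real.cosh t * E t)
          = (K * (-t * Real.cosh t)) * E t := by ring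
        _ ≤ (K * (-t * Real.cosh t)) * (4 * (1 - E t) ^ 2 * (E t)⁻¹) :=
            mul_le_mul_of_nonneg_left h3 h1
        _ = 4 * K * (-t * Real.cosh t * (E t)⁻¹) * (1 - E t) ^ 2 := by ring
    have := term1.sub term2
    rw [sub_zero] at this
    refine this.congr' ?_
    filter_upwards [eventually_lt_atBot (0:ℝ)] with t ht
    rw [deriv_formula hKne (ne_of_lt ht)]
    have hne : 1 - Real.exp (-K * Real.sinh t) ≠ 0 := by
      have h1 : Real.exp (-K * Real.sinh t) ≠ 1 := by
        rw [Ne, Real.exp_eq_one_iff]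
        simp [hKne, Real.sinh_eq_zero, ne_of_lt ht]
      intro h; exact h1 (by linarith)
    simp only [hE]
    rw [neg_mul] at hne ⊢
    field_simp
end

section
/- For constants α ≥ 0 and β > 0, the derivative of φ₂(t) = t/(1 − exp(−2t − α(1 − e^{−t}) − β(e^t − 1))) tends to 1 as t → +∞ and tends to 0 as t → −∞. -/
open Real Filter


noncomputable def phi2aux_g (α β t : ℝ) : ℝ :=
  -2 * t - α * (1 - Real.exp (-t)) - β * (Real.exp t - 1)

noncomputable def phi2aux_gd (α β t : ℝ) : ℝ :=
  -2 - α * Real.exp (-t) - β * Real.exp t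

noncomputable def phi2aux_F (α β t : ℝ) : ℝ :=
  ((1 - Real.exp (phi2aux_g α β t)) + t * (Real.exp (phi2aux_g α β t) * phi2aux_gd α β t)) /
    (1 - Real.exp (phi2aux_g α β t)) ^ 2

lemma phi2aux_hasDerivAt_g (α β t : ℝ) : HasDerivAt (phi2aux_g α β) (phi2aux_gd α β t) t := by
  have h1 : HasDerivAt (fun t : ℝ => -t) (-1) t := (hasDerivAt_id t).neg
  have h2 : HasDerivAt (fun t : ℝ => Real.exp (-t)) (Real.exp (-t) * (-1)) t := h1.exp
  have h3 : HasDerivAt (fun t : ℝ => -2 * t) (-2 * 1) t := (hasDerivAt_id t).const_mul (-2)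
  have h4 : HasDerivAt (fun t : ℝ => α * (1 - Real.exp (-t)))
      (α * (0 - Real.exp (-t) * (-1))) t := ((hasDerivAt_const t 1).sub h2).const_mul α
  have h5 : HasDerivAt (fun t : ℝ => β * (Real.exp t - 1))
      (β * (Real.exp t - 0)) t := ((Real.hasDerivAt_exp t).sub (hasDerivAt_const t 1)).const_mul β
  have := (h3.sub h4).sub h5
  exact this.congr_deriv (by unfold phi2aux_gd; ring)

lemma phi2aux_hasDerivAt_f (α β t : ℝ)
    (ht : 1 - Real.exp (phi2aux_g α β t) ≠ 0) :
    HasDerivAt (fun t : ℝ =>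
        t / (1 - Real.exp (-2 * t - α * (1 - Real.exp (-t)) - β * (Real.exp t - 1))))
      (phi2aux_F α β t) t := by
  have hD : HasDerivAt (fun t : ℝ => 1 - Real.exp (phi2aux_g α β t))
      (0 - Real.exp (phi2aux_g α β t) * phi2aux_gd α β t) t :=
    (hasDerivAt_const t 1).sub (phi2aux_hasDerivAt_g α β t).exp
  have key := (hasDerivAt_id t).div hD ht
  have hval : phi2aux_F α β t =
      (1 * (1 - Real.exp (phi2aux_g α β t)) -
        id t * (0 - Real.exp (phi2aux_g α β t) * phi2aux_gd α β t)) /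
        (1 - Real.exp (phi2aux_g α β t)) ^ 2 := by
    unfold phi2aux_F; simp only [id]; ring
  rw [hval]
  exact key

lemma phi2aux_E_tendsto_zero (α β : ℝ) (hα : 0 ≤ α) (hβ : 0 < β) :
    Tendsto (fun t => Real.exp (phi2aux_g α β t)) atTop (nhds 0) := by
  apply squeeze_zero' (Eventually.of_forall fun t => (Real.exp_pos _).le)
    (g := fun t => Real.exp (-2 * t))
  · filter_upwards [eventually_ge_atTop (0 : ℝ)] with t ht
    apply Real.exp_le_exp.mpr
    unfold phi2aux_g
    have h1 : Real.exp (-t) ≤ 1 := Real.exp_le_one_iff.mpr (by linarith)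
    have h2 : t + 1 ≤ Real.exp t := Real.add_one_le_exp t
    nlinarith [mul_nonneg hα (by linarith : (0:ℝ) ≤ 1 - Real.exp (-t)),
      mul_nonneg hβ.le (by linarith : (0:ℝ) ≤ Real.exp t - 1)]
  · apply Real.tendsto_exp_atBot.comp
    have : Tendsto (fun t : ℝ => 2 * t) atTop atTop :=
      Tendsto.const_mul_atTop two_pos tendsto_id
    exact (tendsto_neg_atTop_atBot.comp this).congr
      (fun t => by show -(2 * t) = -2 * t; ring)

lemma phi2aux_second_tendsto_zero (α β : ℝ) (hα : 0 ≤ α) (hβ : 0 < β) :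
    Tendsto (fun t => t * (Real.exp (phi2aux_g α β t) * phi2aux_gd α β t)) atTop (nhds 0) := by
  rw [tendsto_zero_iff_abs_tendsto_zero]
  apply squeeze_zero' (Eventually.of_forall fun t => abs_nonneg _)
    (g := fun t => (2 + α + β) * Real.exp (-(β * t)))
  · filter_upwards [eventually_ge_atTop (1 : ℝ)] with t ht
    set E := Real.exp (phi2aux_g α β t) with hE
    have hEpos : 0 < E := Real.exp_pos _
    have h1 : Real.exp (-t) ≤ 1 := Real.exp_le_one_iff.mpr (by linarith)
    have h2 : t + 1 ≤ Real.exp t := Real.add_one_le_exp t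
    have hgd : phi2aux_gd α β t ≤ 0 := by
      unfold phi2aux_gd
      nlinarith [Real.exp_pos (-t), Real.exp_pos t, mul_nonneg hα (Real.exp_pos (-t)).le,
        mul_nonneg hβ.le (Real.exp_pos t).le]
    have habs : |t * (E * phi2aux_gd α β t)| = t * (E * (2 + α * Real.exp (-t) + β * Real.exp t)) := by
      rw [abs_mul, abs_mul, abs_of_nonneg (by linarith : (0:ℝ) ≤ t),
        abs_of_pos hEpos, abs_of_nonpos hgd]
      unfold phi2aux_gd; ring_nf
    rw [habs]
    have hexp2t : Real.exp (2 * t) = Real.exp t * Real.exp t := by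
      rw [two_mul, Real.exp_add]
    have hinv : Real.exp t * Real.exp (-t) = 1 := by
      rw [← Real.exp_add]; simp
    -- step 1 : t * (2 + α e^{-t} + β e^t) ≤ (2+α+β) exp(2t)
    have step1 : t * (2 + α * Real.exp (-t) + β * Real.exp t) ≤ (2 + α + β) * Real.exp (2 * t) := by
      rw [hexp2t]
      have hB : 1 ≤ Real.exp t := by linarith
      have hA : t * Real.exp (-t) ≤ 1 := by
        nlinarith [mul_le_mul_of_nonneg_right (show t ≤ Real.exp t by linarith)
          (Real.exp_pos (-t)).le]
      nlinarith [hA, hB, mul_le_mul_of_nonneg_right (show t ≤ Real.exp t by linarith)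
          (mul_nonneg hβ.le (Real.exp_pos t).le),
        mul_nonneg (mul_nonneg hβ.le (Real.exp_pos t).le) (by linarith : (0:ℝ) ≤ Real.exp t - 1),
        mul_nonneg (Real.exp_pos t).le (by linarith : (0:ℝ) ≤ Real.exp t - 1),
        mul_le_mul_of_nonneg_left hA hα]
    -- step 2 : E ≤ exp(-2t - βt)
    have step2 : E ≤ Real.exp (-2 * t - β * t) := by
      rw [hE]
      apply Real.exp_le_exp.mpr
      unfold phi2aux_g
      nlinarith [mul_nonneg hα (by linarith : (0:ℝ) ≤ 1 - Real.exp (-t)),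
        mul_le_mul_of_nonneg_left (by linarith : t ≤ Real.exp t - 1) hβ.le]
    calc t * (E * (2 + α * Real.exp (-t) + β * Real.exp t))
        = (t * (2 + α * Real.exp (-t) + β * Real.exp t)) * E := by ring
      _ ≤ ((2 + α + β) * Real.exp (2 * t)) * Real.exp (-2 * t - β * t) := by
          apply mul_le_mul step1 step2 hEpos.le
          positivity
      _ = (2 + α + β) * Real.exp (-(β * t)) := by
          rw [mul_assoc, ← Real.exp_add]; ring_nf
  · have h1 : Tendsto (fun t : ℝ => β * t) atTop atTop :=
      Tendsto.const_mul_atTop hβ tendsto_id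
    have := Real.tendsto_exp_atBot.comp (tendsto_neg_atTop_atBot.comp h1)
    simpa using this.const_mul (2 + α + β)

lemma phi2aux_negmul : Tendsto (fun t : ℝ => -t * Real.exp (2 * t)) atBot (nhds 0) := by
  have h := Real.tendsto_pow_mul_exp_neg_atTop_nhds_zero 1
  have h2 : Tendsto (fun t : ℝ => 2 * t) atBot atBot :=
    Tendsto.const_mul_atBot two_pos tendsto_id
  have hneg : Tendsto (fun t : ℝ => -(2 * t)) atBot atTop := tendsto_neg_atBot_atTop.comp h2
  have h3 := h.comp hneg
  have h4 := h3.const_mul (1 / 2 : ℝ)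
  simp only [mul_zero] at h4
  apply h4.congr
  intro t
  show (1/2 : ℝ) * ((-(2*t)) ^ 1 * Real.exp (-(-(2 * t)))) = -t * Real.exp (2 * t)
  rw [neg_neg, pow_one]
  ring

lemma phi2aux_E_atBot (α β : ℝ) (hα : 0 ≤ α) (hβ : 0 < β) :
    Tendsto (fun t => Real.exp (phi2aux_g α β t)) atBot atTop := by
  apply tendsto_atTop_mono' atBot
    (show ∀ᶠ t in atBot, Real.exp (-2 * t - α) ≤ Real.exp (phi2aux_g α β t) from ?_)
  · have h2 : Tendsto (fun t : ℝ => 2 * t) atBot atBot :=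
      Tendsto.const_mul_atBot two_pos tendsto_id
    have hneg : Tendsto (fun t : ℝ => -(2 * t)) atBot atTop := tendsto_neg_atBot_atTop.comp h2
    have := tendsto_atTop_add_const_right atBot (-α) hneg
    have h3 := Real.tendsto_exp_atTop.comp this
    apply h3.congr
    intro t
    show Real.exp (-(2 * t) + -α) = Real.exp (-2 * t - α)
    ring_nf
  · filter_upwards [eventually_le_atBot (0 : ℝ)] with t ht
    apply Real.exp_le_exp.mpr
    unfold phi2aux_g
    have h1 : Real.exp t ≤ 1 := Real.exp_le_one_iff.mpr ht
    have h2 : 1 ≤ Real.exp (-t) := Real.one_le_exp (by linarith)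
    nlinarith [mul_nonneg hα (by linarith : (0:ℝ) ≤ Real.exp (-t) - 1),
      mul_nonneg hβ.le (by linarith : (0:ℝ) ≤ 1 - Real.exp t)]

set_option maxHeartbeats 2000000 in
lemma phi2aux_tendsto_F_bot (α β : ℝ) (hα : 0 ≤ α) (hβ : 0 < β) :
    Tendsto (phi2aux_F α β) atBot (nhds 0) := by
  have hEtop := phi2aux_E_atBot α β hα hβ
  have hev2 : ∀ᶠ t in atBot, 2 ≤ Real.exp (phi2aux_g α β t) := hEtop.eventually_ge_atTop 2
  have hfirst : Tendsto (fun t => (1 - Real.exp (phi2aux_g α β t))⁻¹) atBot (nhds 0) := by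
    have h := tendsto_inv_atTop_zero.comp (tendsto_atTop_add_const_right atBot (-1) hEtop)
    have h2 := h.neg
    simp only [neg_zero] at h2
    apply h2.congr
    intro t
    show -((Real.exp (phi2aux_g α β t) + -1)⁻¹) = (1 - Real.exp (phi2aux_g α β t))⁻¹
    rw [show 1 - Real.exp (phi2aux_g α β t) = -(Real.exp (phi2aux_g α β t) + -1) by ring]
    exact neg_inv
  have hsecond : Tendsto
      (fun t => t * (Real.exp (phi2aux_g α β t) * phi2aux_gd α β t) /
        (1 - Real.exp (phi2aux_g α β t)) ^ 2) atBot (nhds 0) := by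
    rw [tendsto_zero_iff_abs_tendsto_zero]
    apply squeeze_zero' (Eventually.of_forall fun t => abs_nonneg _)
      (g := fun t => 4 * ((3 + β) * Real.exp α) * (-t * Real.exp (2 * t)))
    · filter_upwards [hev2, eventually_le_atBot (-1 : ℝ)] with t hE2 ht
      set E := Real.exp (phi2aux_g α β t) with hE
      clear_value E
      have hEpos : 0 < E := hE ▸ Real.exp_pos _
      have h1 : Real.exp t ≤ 1 := Real.exp_le_one_iff.mpr (by linarith)
      have h2 : 1 ≤ Real.exp (-t) := Real.one_le_exp (by linarith)
      have hgd : phi2aux_gd α β t ≤ 0 := by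
        unfold phi2aux_gd
        nlinarith [mul_nonneg hα (Real.exp_pos (-t)).le, mul_nonneg hβ.le (Real.exp_pos t).le]
      have habs : |t * (E * phi2aux_gd α β t) / (1 - E) ^ 2| =
          (-t) * ((2 + α * Real.exp (-t) + β * Real.exp t) * (E / (E - 1) ^ 2)) := by
        have h7 : |(1 - E) ^ 2| = (E - 1) ^ 2 := by
          rw [abs_of_nonneg (sq_nonneg _)]; ring
        have h8 : |t * (E * phi2aux_gd α β t)| =
            (-t) * (E * (2 + α * Real.exp (-t) + β * Real.exp t)) := by
          rw [abs_mul, abs_mul, abs_of_nonpos (by linarith : t ≤ 0),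
            abs_of_pos hEpos, abs_of_nonpos hgd]
          unfold phi2aux_gd
          ring
        rw [abs_div, h7, h8]
        ring
      rw [habs]
      -- claim A : E / (E-1)^2 ≤ 4 / E
      have claimA : E / (E - 1) ^ 2 ≤ 4 / E := by
        rw [div_le_div_iff₀ (by nlinarith) hEpos]
        nlinarith
      -- bound 1/E
      have hEinv : E⁻¹ ≤ Real.exp (2 * t + α) * Real.exp (-(α * Real.exp (-t))) := by
        rw [hE]
        rw [← Real.exp_neg, ← Real.exp_add]
        apply Real.exp_le_exp.mpr
        unfold phi2aux_g
        nlinarith [mul_nonneg hβ.le (by linarith : (0:ℝ) ≤ 1 - Real.exp t)]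
      set x := α * Real.exp (-t) with hx
      have hx0 : 0 ≤ x := mul_nonneg hα (Real.exp_pos _).le
      have hxe : x * Real.exp (-x) ≤ 1 := by
        have h5 : x ≤ Real.exp x := by nlinarith [Real.add_one_le_exp x]
        have h6 : Real.exp x * Real.exp (-x) = 1 := by rw [← Real.exp_add]; simp
        nlinarith [mul_le_mul_of_nonneg_right h5 (Real.exp_pos (-x)).le]
      have hexn1 : Real.exp (-x) ≤ 1 := Real.exp_le_one_iff.mpr (by linarith)
      -- claim B : (2 + x + β e^t) * E⁻¹ ≤ (3+β) * exp α * exp (2t)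
      have claimB : (2 + x + β * Real.exp t) * E⁻¹ ≤ (3 + β) * Real.exp α * Real.exp (2 * t) := by
        have hpos : (0:ℝ) ≤ 2 + x + β * Real.exp t := by
          nlinarith [mul_nonneg hβ.le (Real.exp_pos t).le]
        calc (2 + x + β * Real.exp t) * E⁻¹
            ≤ (2 + x + β * Real.exp t) * (Real.exp (2 * t + α) * Real.exp (-x)) :=
              mul_le_mul_of_nonneg_left hEinv hpos
          _ ≤ (3 + β) * Real.exp α * Real.exp (2 * t) := by
              rw [Real.exp_add]
              have hkey : (2 + x + β * Real.exp t) * Real.exp (-x) ≤ 3 + β := by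
                have htc : Real.exp t * Real.exp (-x) ≤ 1 :=
                  mul_le_one₀ h1 (Real.exp_pos (-x)).le hexn1
                nlinarith [mul_le_mul_of_nonneg_left htc hβ.le]
              calc (2 + x + β * Real.exp t) * (Real.exp (2 * t) * Real.exp α * Real.exp (-x))
                  = ((2 + x + β * Real.exp t) * Real.exp (-x)) *
                      (Real.exp (2 * t) * Real.exp α) := by ring
                _ ≤ (3 + β) * (Real.exp (2 * t) * Real.exp α) :=
                    mul_le_mul_of_nonneg_right hkey
                      (mul_nonneg (Real.exp_pos _).le (Real.exp_pos _).le)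
                _ = (3 + β) * Real.exp α * Real.exp (2 * t) := by ring
      calc (-t) * ((2 + x + β * Real.exp t) * (E / (E - 1) ^ 2))
          ≤ (-t) * ((2 + x + β * Real.exp t) * (4 / E)) := by
            apply mul_le_mul_of_nonneg_left _ (by linarith : (0:ℝ) ≤ -t)
            apply mul_le_mul_of_nonneg_left claimA
            nlinarith [mul_nonneg hβ.le (Real.exp_pos t).le]
        _ = 4 * ((-t) * ((2 + x + β * Real.exp t) * E⁻¹)) := by
            rw [div_eq_mul_inv]
            ring
        _ ≤ 4 * ((-t) * ((3 + β) * Real.exp α * Real.exp (2 * t))) := by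
            apply mul_le_mul_of_nonneg_left _ (by norm_num : (0:ℝ) ≤ 4)
            exact mul_le_mul_of_nonneg_left claimB (by linarith : (0:ℝ) ≤ -t)
        _ = 4 * ((3 + β) * Real.exp α) * (-t * Real.exp (2 * t)) := by ring
    · have := phi2aux_negmul.const_mul (4 * ((3 + β) * Real.exp α))
      simpa using this
  have hsum := hfirst.add hsecond
  simp only [add_zero] at hsum
  apply hsum.congr'
  filter_upwards [hev2] with t hE2
  have hne : 1 - Real.exp (phi2aux_g α β t) ≠ 0 := by
    intro h; nlinarith [hE2]
  unfold phi2aux_F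
  field_simp

lemma phi2aux_tendsto_F_top (α β : ℝ) (hα : 0 ≤ α) (hβ : 0 < β) :
    Tendsto (phi2aux_F α β) atTop (nhds 1) := by
  have hE := phi2aux_E_tendsto_zero α β hα hβ
  have hS := phi2aux_second_tendsto_zero α β hα hβ
  have hnum : Tendsto (fun t => (1 - Real.exp (phi2aux_g α β t)) +
      t * (Real.exp (phi2aux_g α β t) * phi2aux_gd α β t)) atTop (nhds 1) := by
    have := ((tendsto_const_nhds (x := (1:ℝ))).sub hE).add hS
    simpa using this
  have hden : Tendsto (fun t => (1 - Real.exp (phi2aux_g α β t)) ^ 2) atTop (nhds 1) := by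
    have := ((tendsto_const_nhds (x := (1:ℝ))).sub hE).pow 2
    simpa using this
  have := hnum.div hden one_ne_zero
  rw [div_one] at this
  exact this

theorem phi2_deriv_limits_at_infty (α β : ℝ) (hα : 0 ≤ α) (hβ : 0 < β) :
    Tendsto (deriv (fun t : ℝ =>
        t / (1 - Real.exp (-2 * t - α * (1 - Real.exp (-t)) - β * (Real.exp t - 1)))))
      atTop (nhds 1) ∧
      Tendsto (deriv (fun t : ℝ =>
          t / (1 - Real.exp (-2 * t - α * (1 - Real.exp (-t)) - β * (Real.exp t - 1)))))
        atBot (nhds 0) := by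
  constructor
  · apply Filter.Tendsto.congr' _ (phi2aux_tendsto_F_top α β hα hβ)
    filter_upwards [eventually_gt_atTop (0 : ℝ)] with t ht
    have hne : 1 - Real.exp (phi2aux_g α β t) ≠ 0 := by
      have hg : phi2aux_g α β t < 0 := by
        unfold phi2aux_g
        have h1 : Real.exp (-t) ≤ 1 := Real.exp_le_one_iff.mpr (by linarith)
        have h2 : 1 ≤ Real.exp t := Real.one_le_exp (by linarith)
        nlinarith [mul_nonneg hα (by linarith : (0:ℝ) ≤ 1 - Real.exp (-t)),
          mul_nonneg hβ.le (by linarith : (0:ℝ) ≤ Real.exp t - 1)]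
      have := Real.exp_lt_one_iff.mpr hg
      intro h; linarith
    exact ((phi2aux_hasDerivAt_f α β t hne).deriv).symm
  · apply Filter.Tendsto.congr' _ (phi2aux_tendsto_F_bot α β hα hβ)
    filter_upwards [eventually_lt_atBot (0 : ℝ)] with t ht
    have hne : 1 - Real.exp (phi2aux_g α β t) ≠ 0 := by
      have hg : 0 < phi2aux_g α β t := by
        unfold phi2aux_g
        have h1 : Real.exp t ≤ 1 := Real.exp_le_one_iff.mpr (by linarith)
        have h2 : 1 ≤ Real.exp (-t) := Real.one_le_exp (by linarith)
        nlinarith [mul_nonneg hα (by linarith : (0:ℝ) ≤ Real.exp (-t) - 1),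
          mul_nonneg hβ.le (by linarith : (0:ℝ) ≤ 1 - Real.exp t)]
      have := Real.one_lt_exp_iff.mpr hg
      intro h; linarith
    exact ((phi2aux_hasDerivAt_f α β t hne).deriv).symm
end
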